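/- Let 𝒳 ⊆ ℝᵐ be an open convex set and 𝒴 ⊂ ℝᵈ a compact set. Let f_n : 𝒳 × 𝒴 → ℝ be a sequence of functions, each convex in its first variable, converging pointwise on 𝒳 × 𝒴 to a function f. Suppose that for each x ∈ 𝒳, g_n(x) = sup_{y∈𝒴} |f_n(x,y) − f(x,y)| → 0 as n → ∞, and that sup_{y∈𝒴} |f(x,y)| < ∞ for each x ∈ 𝒳. Then for every compact set S ⊂ 𝒳, sup_{x∈S} sup_{y∈𝒴} |f_n(x,y) − f(x,y)| → 0 as n → ∞. -/

import Mathlib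

open Filter Set Metric

/-- Finite choice of a common bound. -/
lemma finite_exists_forall_aux {α β : Type*} [SemilatticeSup β] [Nonempty β] {t : Set α}
    (ht : t.Finite) {P : α → β → Prop}
    (hmono : ∀ p M M', M ≤ M' → P p M → P p M')
    (h : ∀ p ∈ t, ∃ M, P p M) : ∃ M, ∀ p ∈ t, P p M := by
  revert h
  refine Set.Finite.induction_on (motive := fun t _ => (∀ p ∈ t, ∃ M, P p M) → ∃ M, ∀ p ∈ t, P p M)
    t ht (fun _ => ⟨Classical.arbitrary β, by simp⟩) ?_
  intro a s ha hfin ih h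
  obtain ⟨M₁, hM₁⟩ := ih (fun p hp => h p (Set.mem_insert_of_mem _ hp))
  obtain ⟨M₂, hM₂⟩ := h a (Set.mem_insert _ _)
  refine ⟨M₁ ⊔ M₂, fun p hp => ?_⟩
  rcases hp with rfl | hp
  · exact hmono _ _ _ le_sup_right hM₂
  · exact hmono _ _ _ le_sup_left (hM₁ _ hp)

/-- The vertex set of a cube is finite. -/
lemma cube_finite_aux {m : ℕ} (x₀ : Fin m → ℝ) (ρ : ℝ) :
    (Set.pi Set.univ (fun i => ({x₀ i - ρ, x₀ i + ρ} : Set ℝ))).Finite :=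
  Set.Finite.pi (fun _ => (Set.finite_singleton _).insert _)

/-- The vertices of the cube lie in the closed ball (sup norm). -/
lemma cube_subset_ball_aux {m : ℕ} (x₀ : Fin m → ℝ) {ρ : ℝ} (hρ : 0 ≤ ρ) :
    Set.pi Set.univ (fun i => ({x₀ i - ρ, x₀ i + ρ} : Set ℝ)) ⊆ closedBall x₀ ρ := by
  intro v hv
  rw [mem_closedBall, dist_pi_le_iff hρ]
  intro i
  rcases hv i (Set.mem_univ i) with h | h <;> rw [Real.dist_eq, h] <;> simp [abs_le] <;> linarith

/-- The closed ball (sup norm) lies in the convex hull of the cube's vertices. -/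
lemma ball_subset_hull_aux {m : ℕ} (x₀ : Fin m → ℝ) {ρ : ℝ} (hρ : 0 ≤ ρ) :
    closedBall x₀ ρ ⊆ convexHull ℝ (Set.pi Set.univ (fun i => ({x₀ i - ρ, x₀ i + ρ} : Set ℝ))) := by
  intro x hx
  rw [mem_closedBall, dist_pi_le_iff hρ] at hx
  refine mem_convexHull_pi (fun i _ => ?_)
  rw [convexHull_pair, segment_eq_Icc (by linarith)]
  have := hx i
  rw [Real.dist_eq, abs_le] at this
  constructor <;> linarith [this.1, this.2]

/-- Reflection through the center stays in the closed ball. -/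
lemma reflect_mem_aux {m : ℕ} {x₀ x : Fin m → ℝ} {ρ : ℝ} (hx : x ∈ closedBall x₀ ρ) :
    (fun i => 2 * x₀ i - x i) ∈ closedBall x₀ ρ := by
  rw [mem_closedBall, dist_eq_norm] at hx ⊢
  have h : (fun i => 2 * x₀ i - x i) - x₀ = -(x - x₀) := by
    funext i; simp [Pi.sub_apply]; ring
  rw [h, norm_neg]; exact hx


/-- uniform convergence of convex functions with a compact parameter:
if `f_n(·, y)` are convex on an open convex `𝒳 ⊆ ℝᵐ` for each `y` in a compact `𝒴 ⊂ ℝᵈ`,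
`f_n → f` pointwise on `𝒳 × 𝒴`, for each `x ∈ 𝒳` the convergence is uniform in `y ∈ 𝒴`, and
`sup_{y∈𝒴} |f(x,y)| < ∞` for each `x ∈ 𝒳`, then `f_n → f` uniformly on `S × 𝒴` for every
compact `S ⊂ 𝒳`. -/
theorem uniform_convergence_convex_compact_param {m d : ℕ}
    (𝒳 : Set (Fin m → ℝ)) (h𝒳open : IsOpen 𝒳) (h𝒳conv : Convex ℝ 𝒳)
    (𝒴 : Set (Fin d → ℝ)) (h𝒴 : IsCompact 𝒴)
    (f : ℕ → (Fin m → ℝ) → (Fin d → ℝ) → ℝ) (flim : (Fin m → ℝ) → (Fin d → ℝ) → ℝ)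
    (hconv : ∀ n, ∀ y ∈ 𝒴, ConvexOn ℝ 𝒳 (fun x => f n x y))
    (hptwise : ∀ x ∈ 𝒳, ∀ y ∈ 𝒴, Tendsto (fun n => f n x y) atTop (nhds (flim x y)))
    (hunif_y : ∀ x ∈ 𝒳, ∀ ε > (0 : ℝ), ∃ N : ℕ, ∀ n ≥ N, ∀ y ∈ 𝒴, |f n x y - flim x y| ≤ ε)
    (hbdd : ∀ x ∈ 𝒳, ∃ M : ℝ, ∀ y ∈ 𝒴, |flim x y| ≤ M) :
    ∀ S ⊆ 𝒳, IsCompact S →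
      ∀ ε > (0 : ℝ), ∃ N : ℕ, ∀ n ≥ N, ∀ x ∈ S, ∀ y ∈ 𝒴, |f n x y - flim x y| ≤ ε := by
  -- the limit is convex in the first variable
  have hflimconv : ∀ y ∈ 𝒴, ConvexOn ℝ 𝒳 (fun x => flim x y) := by
    intro y hy
    refine ⟨h𝒳conv, fun x hx z hz a b ha hb hab => ?_⟩
    have h1 := hptwise _ (h𝒳conv hx hz ha hb hab) y hy
    have h2 : Tendsto (fun n => a * f n x y + b * f n z y) atTop
        (nhds (a * flim x y + b * flim z y)) :=
      ((hptwise x hx y hy).const_mul a).add ((hptwise z hz y hy).const_mul b)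
    have h3 : ∀ n, f n (a • x + b • z) y ≤ a * f n x y + b * f n z y := fun n => by
      simpa [smul_eq_mul] using (hconv n y hy).2 hx hz ha hb hab
    simpa [smul_eq_mul] using le_of_tendsto_of_tendsto' h1 h2 h3
  intro S hS hScomp ε hε
  have key : ∀ x₀ ∈ S, ∃ δ : ℝ, 0 < δ ∧ ∃ N : ℕ, ∀ n ≥ N, ∀ x ∈ closedBall x₀ δ,
      ∀ y ∈ 𝒴, |f n x y - flim x y| ≤ ε := by
    intro x₀ hx₀S
    have hx₀ : x₀ ∈ 𝒳 := hS hx₀S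
    obtain ⟨r', hr', hb'⟩ := Metric.isOpen_iff.1 h𝒳open x₀ hx₀
    set r : ℝ := r' / 4 with hrdef
    have hr : 0 < r := by positivity
    have hball2r : closedBall x₀ (2 * r) ⊆ 𝒳 :=
      (Metric.closedBall_subset_ball (by rw [hrdef]; linarith)).trans hb'
    -- uniform bound on the vertices of the big cube and at x₀
    set V2 : Set (Fin m → ℝ) :=
      Set.pi Set.univ (fun i => ({x₀ i - 2*r, x₀ i + 2*r} : Set ℝ)) with hV2
    have hV2X : V2 ⊆ 𝒳 := (cube_subset_ball_aux x₀ (by linarith)).trans hball2r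
    obtain ⟨M₁, hM₁⟩ := finite_exists_forall_aux (cube_finite_aux x₀ (2*r))
      (P := fun p M => ∀ y ∈ 𝒴, |flim p y| ≤ M)
      (fun p M M' hMM' hM y hy => (hM y hy).trans hMM')
      (fun p hp => hbdd p (hV2X hp))
    obtain ⟨M₀, hM₀⟩ := hbdd x₀ hx₀
    obtain ⟨M, hM0, hMV, hMx₀⟩ : ∃ M : ℝ, 0 ≤ M ∧ (∀ p ∈ V2, ∀ y ∈ 𝒴, |flim p y| ≤ M) ∧
        (∀ y ∈ 𝒴, |flim x₀ y| ≤ M) :=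
      ⟨max (max M₁ M₀) 0, le_max_right _ _,
        fun p hp y hy => (hM₁ p hp y hy).trans ((le_max_left _ _).trans (le_max_left _ _)),
        fun y hy => (hM₀ y hy).trans ((le_max_right M₁ M₀).trans (le_max_left _ _))⟩
    -- upper bound for flim on the big ball
    have hup2r : ∀ x ∈ closedBall x₀ (2*r), ∀ y ∈ 𝒴, flim x y ≤ M := by
      intro x hx y hy
      obtain ⟨v, hv, hle⟩ := (hflimconv y hy).exists_ge_of_mem_convexHull hV2X
        (ball_subset_hull_aux x₀ (by linarith) hx)
      exact hle.trans (abs_le.1 (hMV v hv y hy)).2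
    -- choice of δ
    have h24 : (0:ℝ) < 24 * M + 24 := by linarith
    obtain ⟨δ, hδpos, hδr, hδε⟩ : ∃ δ : ℝ, 0 < δ ∧ δ ≤ r ∧ δ ≤ ε * r / (24 * M + 24) :=
      ⟨min r (ε * r / (24 * M + 24)), lt_min hr (div_pos (mul_pos hε hr) h24),
        min_le_left _ _, min_le_right _ _⟩
    have hballδ2r : closedBall x₀ δ ⊆ closedBall x₀ (2*r) :=
      Metric.closedBall_subset_closedBall (by linarith)
    have hballδX : closedBall x₀ δ ⊆ 𝒳 := hballδ2r.trans hball2r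
    -- oscillation of flim on the small ball
    have hosc : ∀ y ∈ 𝒴, ∀ x ∈ closedBall x₀ δ, |flim x y - flim x₀ y| ≤ 6 * M * (δ / r) := by
      intro y hy x hx
      have hxX : x ∈ 𝒳 := hballδX hx
      have hxn : ‖x - x₀‖ ≤ δ := by rwa [← dist_eq_norm, ← mem_closedBall]
      have hnorm : ‖(r / δ) • (x - x₀)‖ ≤ r := by
        rw [norm_smul, Real.norm_eq_abs, abs_of_nonneg (by positivity : (0:ℝ) ≤ r / δ)]
        calc r / δ * ‖x - x₀‖ ≤ r / δ * δ :=
              mul_le_mul_of_nonneg_left hxn (by positivity)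
          _ = r := by field_simp
      set z : Fin m → ℝ := x₀ + (r / δ) • (x - x₀) with hzdef
      set z' : Fin m → ℝ := x₀ - (r / δ) • (x - x₀) with hz'def
      have hzball : z ∈ closedBall x₀ (2*r) := by
        rw [mem_closedBall, dist_eq_norm]
        have hzz : z - x₀ = (r / δ) • (x - x₀) := by rw [hzdef]; abel
        rw [hzz]; linarith
      have hz'ball : z' ∈ closedBall x₀ (2*r) := by
        rw [mem_closedBall, dist_eq_norm]
        have hzz : z' - x₀ = -((r / δ) • (x - x₀)) := by rw [hz'def]; abel
        rw [hzz, norm_neg]; linarith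
      have hzup : flim z y ≤ M := hup2r _ hzball y hy
      have hz'up : flim z' y ≤ M := hup2r _ hz'ball y hy
      have hx₀b := abs_le.1 (hMx₀ y hy)
      -- the two convex combinations
      have hcomb : (1 - δ/r) • x₀ + (δ/r) • z = x := by
        funext i
        simp only [hzdef, Pi.add_apply, Pi.smul_apply, Pi.sub_apply, smul_eq_mul]
        field_simp
        ring
      have hrδ : (0:ℝ) < r + δ := by linarith
      have hcomb' : (r/(r+δ)) • x + (δ/(r+δ)) • z' = x₀ := by
        funext i
        simp only [hz'def, Pi.add_apply, Pi.smul_apply, Pi.sub_apply, smul_eq_mul]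
        field_simp
        ring
      have h1' : r * flim x y ≤ (r - δ) * flim x₀ y + δ * flim z y := by
        have h1 := (hflimconv y hy).2 hx₀ (hball2r hzball)
          (sub_nonneg.2 ((div_le_one hr).2 hδr)) (by positivity)
          (by ring : (1 - δ/r) + δ/r = 1)
        rw [hcomb] at h1
        simp only [smul_eq_mul] at h1
        have := mul_le_mul_of_nonneg_left h1 hr.le
        calc r * flim x y ≤ r * ((1 - δ/r) * flim x₀ y + δ/r * flim z y) := this
          _ = (r - δ) * flim x₀ y + δ * flim z y := by field_simp
      have h2' : (r + δ) * flim x₀ y ≤ r * flim x y + δ * flim z' y := by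
        have h2 := (hflimconv y hy).2 hxX (hball2r hz'ball)
          (show (0:ℝ) ≤ r/(r+δ) by positivity) (show (0:ℝ) ≤ δ/(r+δ) by positivity)
          (by rw [← add_div, div_self hrδ.ne'])
        rw [hcomb'] at h2
        simp only [smul_eq_mul] at h2
        have := mul_le_mul_of_nonneg_left h2 hrδ.le
        calc (r + δ) * flim x₀ y ≤ (r + δ) * (r/(r+δ) * flim x y + δ/(r+δ) * flim z' y) := this
          _ = r * flim x y + δ * flim z' y := by field_simp
      rw [abs_le]
      constructor
      · rw [show -(6*M*(δ/r)) = (-(6*M*δ))/r by ring, div_le_iff₀ hr]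
        nlinarith [h2', mul_le_mul_of_nonneg_left hz'up hδpos.le,
          mul_le_mul_of_nonneg_left hx₀b.1 hδpos.le, mul_nonneg hM0 hδpos.le]
      · rw [show 6*M*(δ/r) = (6*M*δ)/r by ring, le_div_iff₀ hr]
        nlinarith [h1', mul_le_mul_of_nonneg_left hzup hδpos.le,
          mul_le_mul_of_nonneg_left hx₀b.1 hδpos.le, mul_nonneg hM0 hδpos.le]
    -- uniform-in-y convergence at the vertices of the small cube and at x₀
    set Vδ : Set (Fin m → ℝ) :=
      Set.pi Set.univ (fun i => ({x₀ i - δ, x₀ i + δ} : Set ℝ)) with hVδ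
    have hVδball : Vδ ⊆ closedBall x₀ δ := cube_subset_ball_aux x₀ hδpos.le
    have hVδX : Vδ ⊆ 𝒳 := hVδball.trans hballδX
    obtain ⟨N, hN⟩ := finite_exists_forall_aux ((cube_finite_aux x₀ δ).insert x₀)
      (P := fun p N => ∀ n ≥ N, ∀ y ∈ 𝒴, |f n p y - flim p y| ≤ ε/6)
      (fun p N N' hNN' hp n hn => hp n (le_trans hNN' hn))
      (fun p hp => hunif_y p (by rcases hp with rfl | hp; exacts [hx₀, hVδX hp]) (ε/6)
        (by positivity))
    refine ⟨δ, hδpos, N, fun n hn x hx y hy => ?_⟩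
    -- upper bound for f n on the small ball
    have hupf : ∀ w ∈ closedBall x₀ δ, f n w y ≤ flim x₀ y + 6*M*(δ/r) + ε/6 := by
      intro w hw
      obtain ⟨v, hv, hle⟩ := (hconv n y hy).exists_ge_of_mem_convexHull hVδX
        (ball_subset_hull_aux x₀ hδpos.le hw)
      have h1 := abs_le.1 (hN v (Set.mem_insert_of_mem _ hv) n hn y hy)
      have h2 := abs_le.1 (hosc y hy v (hVδball hv))
      linarith [h1.2, h2.2, hle]
    -- lower bound via reflection
    set x' : Fin m → ℝ := fun i => 2 * x₀ i - x i with hx'def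
    have hx'ball : x' ∈ closedBall x₀ δ := reflect_mem_aux hx
    have hmid : (1/2 : ℝ) • x + (1/2 : ℝ) • x' = x₀ := by
      funext i
      simp only [hx'def, Pi.add_apply, Pi.smul_apply, smul_eq_mul]
      ring
    have hmidineq : f n x₀ y ≤ 1/2 * f n x y + 1/2 * f n x' y := by
      have h := (hconv n y hy).2 (hballδX hx) (hballδX hx'ball)
        (by norm_num : (0:ℝ) ≤ 1/2) (by norm_num : (0:ℝ) ≤ 1/2) (by norm_num)
      rw [hmid] at h
      simpa [smul_eq_mul] using h
    have hu : f n x y ≤ flim x₀ y + 6*M*(δ/r) + ε/6 := hupf x hx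
    have hu' : f n x' y ≤ flim x₀ y + 6*M*(δ/r) + ε/6 := hupf x' hx'ball
    have hx₀n := abs_le.1 (hN x₀ (Set.mem_insert _ _) n hn y hy)
    have hoscx := abs_le.1 (hosc y hy x hx)
    have hKb : 12*M*(δ/r) ≤ ε/2 := by
      have h1 : δ/r ≤ ε/(24*M+24) := by
        rw [div_le_div_iff₀ hr h24]
        calc δ * (24*M+24) ≤ (ε * r / (24*M+24)) * (24*M+24) :=
              mul_le_mul_of_nonneg_right hδε h24.le
          _ = ε * r := by field_simp
      have hQpos : (0:ℝ) ≤ ε/(24*M+24) := by positivity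
      have hQ : (24*M+24) * (ε/(24*M+24)) = ε := by field_simp
      nlinarith [mul_le_mul_of_nonneg_left h1 (by linarith : (0:ℝ) ≤ 12*M), hQ, hQpos]
    rw [abs_le]
    constructor <;>
      [linarith [hu', hmidineq, hx₀n.1, hx₀n.2, hoscx.2, hKb];
       linarith [hu, hoscx.1, hKb]]
  -- globalize by compactness
  choose! δ hδpos N' hN' using key
  obtain ⟨t, htS, hcover⟩ := hScomp.elim_nhds_subcover (fun x => Metric.ball x (δ x))
    (fun x hx => Metric.ball_mem_nhds x (hδpos x hx))
  refine ⟨t.sup N', fun n hn x hx y hy => ?_⟩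
  obtain ⟨x₀, hx₀t, hxball⟩ := Set.mem_iUnion₂.1 (hcover hx)
  exact hN' x₀ (htS x₀ hx₀t) n (le_trans (Finset.le_sup hx₀t) hn) x
    (Metric.ball_subset_closedBall hxball) y hy
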